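/- Every superpermutation on 4 symbols has length at least 33. -/

import Mathlib

def permList : List (List (Fin 4)) := [[0,1,2,3], [0,1,3,2], [0,2,1,3], [0,2,3,1], [0,3,1,2], [0,3,2,1], [1,0,2,3], [1,0,3,2], [1,2,0,3], [1,2,3,0], [1,3,0,2], [1,3,2,0], [2,0,1,3], [2,0,3,1], [2,1,0,3], [2,1,3,0], [2,3,0,1], [2,3,1,0], [3,0,1,2], [3,0,2,1], [3,1,0,2], [3,1,2,0], [3,2,0,1], [3,2,1,0]]

def cls (a : List (Fin 4)) : List (Fin 4) := a.rotate (a.idxOf 0)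

def reps : List (List (Fin 4)) := permList.filter (fun a => a.idxOf 0 == 0)

def lbF (cur : List (Fin 4)) (rem : List (List (Fin 4))) : ℕ :=
  rem.length + reps.countP (fun c => !(c == cls cur) && rem.any (fun t => cls t == c))

def search : ℕ → List (Fin 4) → List (List (Fin 4)) → ℕ → Bool
  | 0, _, _, _ => false
  | (fuel+1), cur, rem, b =>
      rem.isEmpty ||
      (decide (lbF cur rem ≤ b) &&
        rem.any fun t => (List.range 4).any fun i =>
          decide (i + 1 ≤ b) &&
            ((i + 1 == 4) || decide (cur.drop (i+1) = t.take (4-(i+1)))) &&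
            search fuel t (rem.erase t) (b - (i+1)))

/-- `SPath cur rem b` : starting at window `cur`, one can visit all windows of
`rem` with overlap-compatible steps of total cost at most `b`. -/
inductive SPath : List (Fin 4) → List (List (Fin 4)) → ℕ → Prop
  | nil (cur : List (Fin 4)) (b : ℕ) : SPath cur [] b
  | cons {cur : List (Fin 4)} {rem : List (List (Fin 4))} {b : ℕ}
      (t : List (Fin 4)) (g : ℕ) (ht : t ∈ rem) (hg : 1 ≤ g)
      (hcomp : g ≤ 3 → cur.drop g = t.take (4 - g)) (hb : min g 4 ≤ b)
      (hnext : SPath t (rem.erase t) (b - min g 4)) : SPath cur rem b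

theorem beq_inst_eq : (instBEqOfDecidableEq : BEq (List (Fin 4))) = List.instBEq :=
  lawful_beq_subsingleton _ _

theorem perm_erase {l₁ l₂ : List (List (Fin 4))} (t : List (Fin 4)) (hp : l₁.Perm l₂) :
    (l₁.erase t).Perm (l₂.erase t) := by
  have h := List.Perm.erase (α := List (Fin 4)) t hp
  exact h

theorem path_perm {cur rem b} (h : SPath cur rem b) :
    ∀ rem', rem.Perm rem' → SPath cur rem' b := by
  induction h with
  | nil cur b => intro rem' hp; rw [hp.symm.eq_nil]; exact SPath.nil cur b
  | cons t g ht hg hcomp hb hnext ih =>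
      intro rem' hp
      exact SPath.cons t g (hp.mem_iff.mp ht) hg hcomp hb (ih _ (perm_erase t hp))

theorem countP_eq_le_one {α} [BEq α] [LawfulBEq α] {l : List α} (h : l.Nodup) (x : α) :
    l.countP (fun c => c == x) ≤ 1 := by
  induction l with
  | nil => simp
  | cons a l ih =>
      rw [List.countP_cons]
      rcases List.nodup_cons.mp h with ⟨ha, hl⟩
      by_cases hax : a = x
      · subst hax
        have hz : l.countP (fun c => c == a) = 0 := by
          refine List.countP_eq_zero.mpr ?_
          intro c hc hbc
          exact ha (by rwa [eq_of_beq hbc] at hc)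
        simp [hz]
      · have ih' := ih hl
        have : (a == x) = false := beq_eq_false_iff_ne.mpr hax
        simp [this]
        omega

theorem fact_rot : ∀ a ∈ permList, ∀ c ∈ permList, a.drop 1 = c.take 3 → cls c = cls a := by decide

theorem reps_nodup : reps.Nodup := by decide

theorem countP_or_le (l : List (List (Fin 4))) (p q : List (Fin 4) → Bool) :
    l.countP (fun a => p a || q a) ≤ l.countP p + l.countP q := by
  induction l with
  | nil => simp
  | cons a l ih =>
      by_cases hp : p a = true <;> by_cases hq : q a = true <;>
        simp [List.countP_cons, hp, hq] <;> omega

theorem lb_le {cur rem b} (h : SPath cur rem b)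
    (hmem : ∀ x ∈ cur :: rem, x ∈ permList) : lbF cur rem ≤ b := by
  induction h with
  | nil cur b => simp [lbF]
  | @cons cur rem b t g ht hg hcomp hb hnext ih =>
      have hmem' : ∀ x ∈ t :: rem.erase t, x ∈ permList := by
        intro x hx
        rcases List.mem_cons.mp hx with h1 | h1
        · rw [h1]; exact hmem t (by simp [ht])
        · exact hmem x (List.mem_cons_of_mem _ ((List.erase_sublist : (rem.erase t).Sublist rem).mem h1))
      have ih' := ih hmem'
      have hlen : (rem.erase t).length = rem.length - 1 := List.length_erase_of_mem ht
      have hlen' : 1 ≤ rem.length := List.length_pos_iff.mpr (List.ne_nil_of_mem ht)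
      by_cases hg3 : g = 1
      · -- cost-1 step stays in the same class
        have hcls : cls t = cls cur := by
          refine fact_rot cur (hmem cur (by simp)) t (hmem t (by simp [ht])) ?_
          have := hcomp (by omega); simpa [hg3] using this
        have hcnt : reps.countP (fun c => !(c == cls cur) && rem.any (fun x => cls x == c)) ≤
            reps.countP (fun c => !(c == cls t) && (rem.erase t).any (fun x => cls x == c)) := by
          refine List.countP_mono_left ?_
          intro c _ hc
          simp only [Bool.and_eq_true, Bool.not_eq_true', beq_eq_false_iff_ne, ne_eq,
            List.any_eq_true, beq_iff_eq] at hc ⊢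
          obtain ⟨hne, x, hx, hcx⟩ := hc
          refine ⟨by rw [hcls]; exact hne, x, ?_, hcx⟩
          have hxt : x ≠ t := by
            intro hxe; apply hne; rw [← hcx, hxe, hcls]
          exact (List.mem_erase_of_ne hxt).mpr hx
        have : lbF t (rem.erase t) ≤ b - min g 4 := ih'
        simp only [lbF] at *
        omega
      · -- cost ≥ 2 step: class count drops by at most one
        have hmin : 2 ≤ min g 4 := by omega
        have hcnt : reps.countP (fun c => !(c == cls cur) && rem.any (fun x => cls x == c)) ≤
            reps.countP (fun c => !(c == cls t) && (rem.erase t).any (fun x => cls x == c)) + 1 := by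
          have step1 : reps.countP (fun c => !(c == cls cur) && rem.any (fun x => cls x == c)) ≤
              reps.countP (fun c =>
                (!(c == cls t) && (rem.erase t).any (fun x => cls x == c)) || (c == cls t)) := by
            refine List.countP_mono_left ?_
            intro c _ hc
            simp only [Bool.and_eq_true, Bool.not_eq_true', beq_eq_false_iff_ne, ne_eq,
              List.any_eq_true, beq_iff_eq, Bool.or_eq_true] at hc ⊢
            obtain ⟨hne, x, hx, hcx⟩ := hc
            by_cases hct : c = cls t
            · exact Or.inr hct
            · refine Or.inl ⟨hct, x, ?_, hcx⟩
              have hxt : x ≠ t := by intro hxe; apply hct; rw [← hcx, hxe]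
              exact (List.mem_erase_of_ne hxt).mpr hx
          have step2 : reps.countP (fun c =>
                (!(c == cls t) && (rem.erase t).any (fun x => cls x == c)) || (c == cls t)) ≤
              reps.countP (fun c => !(c == cls t) && (rem.erase t).any (fun x => cls x == c)) +
                reps.countP (fun c => c == cls t) :=
            countP_or_le _ _ _
          have step3 : reps.countP (fun c => c == cls t) ≤ 1 :=
            countP_eq_le_one reps_nodup (cls t)
          omega
        have : lbF t (rem.erase t) ≤ b - min g 4 := ih'
        simp only [lbF] at *
        omega

theorem search_complete {cur rem b} (h : SPath cur rem b) :
    ∀ fuel, (∀ x ∈ cur :: rem, x ∈ permList) → rem.length < fuel →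
      search fuel cur rem b = true := by
  induction h with
  | nil cur b =>
      intro fuel _ hfuel
      match fuel, hfuel with
      | (f+1), _ => simp [search]
  | @cons cur rem b t g ht hg hcomp hb hnext ih =>
      intro fuel hmem hfuel
      match fuel, hfuel with
      | (f+1), hfuel =>
        have hne : rem ≠ [] := List.ne_nil_of_mem ht
        have hmem' : ∀ x ∈ t :: rem.erase t, x ∈ permList := by
          intro x hx
          rcases List.mem_cons.mp hx with h1 | h1
          · rw [h1]; exact hmem t (by simp [ht])
          · exact hmem x (List.mem_cons_of_mem _ ((List.erase_sublist : (rem.erase t).Sublist rem).mem h1))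
        have hlen : (rem.erase t).length < f := by
          have := List.length_erase_of_mem ht
          have : 1 ≤ rem.length := List.length_pos_iff.mpr hne
          omega
        have hrec := ih (f) hmem' (by
          have := List.length_erase_of_mem ht
          omega)
        have hlb := lb_le (SPath.cons t g ht hg hcomp hb hnext) hmem
        simp only [search, Bool.or_eq_true, Bool.and_eq_true, List.any_eq_true]
        right
        refine ⟨by simpa using hlb, t, ht, (min g 4 - 1), ?_, ?_⟩
        · simp [List.mem_range]; omega
        · have hmineq : min g 4 - 1 + 1 = min g 4 := by omega
          rw [hmineq]
          refine ⟨⟨by simpa using hb, ?_⟩, hrec⟩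
          by_cases hg4 : 4 ≤ g
          · have : min g 4 = 4 := by omega
            simp [this]
          · have hmg : min g 4 = g := by omega
            rw [hmg]
            simp only [Bool.or_eq_true, beq_iff_eq, decide_eq_true_eq]
            exact Or.inr (hcomp (by omega))

set_option maxRecDepth 1000000 in
set_option maxHeartbeats 4000000 in
theorem mainFact : (permList.all fun s => !search 24 s (permList.erase s) 28) = true := by decide


theorem fact_ofFn_mem : ∀ σ : Equiv.Perm (Fin 4), List.ofFn ⇑σ ∈ permList := by decide

theorem fact_surj : ∀ x ∈ permList, ∃ σ : Equiv.Perm (Fin 4), List.ofFn ⇑σ = x := by decide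

theorem permList_nodup : permList.Nodup := by decide

theorem permList_length : permList.length = 24 := by decide

theorem path_build (w : List (Fin 4)) :
    ∀ (ps : List ℕ) (p b : ℕ), List.Chain' (· < ·) (p :: ps) →
      (∀ q ∈ ps, q ≤ p + b) →
      SPath ((w.drop p).take 4) (ps.map (fun q => (w.drop q).take 4)) b := by
  intro ps
  induction ps with
  | nil => intro p b _ _; exact SPath.nil _ _
  | cons q ps ih =>
      intro p b hch hle
      have hch' := List.isChain_cons_cons.mp hch
      have hpq : p < q := hch'.1
      have hq : q ≤ p + b := hle q (by simp)
      refine SPath.cons ((w.drop q).take 4) (q - p) (by simp) (by omega) ?_ (by omega) ?_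
      · intro hg3
        have hqpg : q = p + (q - p) := by omega
        have h1 : min (4 - (q - p)) 4 = 4 - (q - p) := by omega
        rw [List.drop_take, List.drop_drop, List.take_take, h1, ← hqpg]
      · rw [List.map_cons, List.erase_cons_head]
        refine ih q (b - min (q - p) 4) hch'.2 ?_
        intro r hr
        have := hle r (by simp [hr])
        have hm : min (q - p) 4 ≤ q - p := min_le_left _ _
        omega

/-- A superpermutation on `n` symbols: a word over `Fin n` containing every
permutation of `Fin n` (viewed as the word `σ 0, σ 1, …, σ (n-1)`) as a
contiguous substring (infix). -/
def IsSuperperm (n : ℕ) (w : List (Fin n)) : Prop :=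
  ∀ σ : Equiv.Perm (Fin n), List.ofFn ⇑σ <:+: w

theorem stmt_6 (w : List (Fin 4)) (hw : IsSuperperm 4 w) : 33 ≤ w.length := by
  by_contra hlen
  push_neg at hlen
  have hpos : ∀ σ : Equiv.Perm (Fin 4),
      ∃ p : ℕ, (w.drop p).take 4 = List.ofFn ⇑σ ∧ p + 4 ≤ w.length := by
    intro σ
    obtain ⟨s, t, hst⟩ := hw σ
    refine ⟨s.length, ?_, ?_⟩
    · rw [← hst, List.append_assoc, List.drop_left, List.take_left' (by simp)]
    · rw [← hst]
      simp [List.length_append]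
  choose pos hwin hle using hpos
  have posinj : Function.Injective pos := by
    intro σ τ h
    have h2 : List.ofFn ⇑σ = List.ofFn ⇑τ := by rw [← hwin σ, ← hwin τ, h]
    exact Equiv.coe_fn_injective (List.ofFn_inj.mp h2)
  set P : Finset ℕ := Finset.image pos Finset.univ with hP
  set l : List ℕ := P.sort (· ≤ ·) with hl
  have hsort : l.Pairwise (· < ·) := (Finset.sortedLT_sort P).pairwise
  have hnodupl : l.Nodup := Finset.sort_nodup P _
  have hmemP : ∀ x, x ∈ l ↔ ∃ σ, pos σ = x := by
    intro x
    rw [hl, Finset.mem_sort, hP, Finset.mem_image]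
    simp
  have hlen24 : l.length = 24 := by
    rw [hl, Finset.length_sort, hP, Finset.card_image_of_injective _ posinj,
      Finset.card_univ]
    simp [Fintype.card_perm]
    decide
  obtain ⟨p0, ps, hcons⟩ : ∃ p0 ps, l = p0 :: ps := by
    cases hll : l with
    | nil => rw [hll] at hlen24; simp at hlen24
    | cons a as => exact ⟨a, as, rfl⟩
  set win : ℕ → List (Fin 4) := fun q => (w.drop q).take 4 with hwdef
  -- every element of l is a window of a permutation
  have hwinofFn : ∀ q ∈ l, ∃ σ : Equiv.Perm (Fin 4), pos σ = q ∧ win q = List.ofFn ⇑σ := by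
    intro q hq
    obtain ⟨σ, hσ⟩ := (hmemP q).mp hq
    exact ⟨σ, hσ, by rw [← hσ]; exact hwin σ⟩
  have hwininj : ∀ q ∈ l, ∀ r ∈ l, win q = win r → q = r := by
    intro q hq r hr hqr
    obtain ⟨σ, hσ, hσ2⟩ := hwinofFn q hq
    obtain ⟨τ, hτ, hτ2⟩ := hwinofFn r hr
    have hst : σ = τ :=
      Equiv.coe_fn_injective (List.ofFn_inj.mp (by rw [← hσ2, ← hτ2, hqr]))
    rw [← hσ, ← hτ, hst]
  have hbound : ∀ q ∈ l, q + 4 ≤ w.length := by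
    intro q hq
    obtain ⟨σ, hσ⟩ := (hmemP q).mp hq
    rw [← hσ]; exact hle σ
  have hchain : List.Chain' (· < ·) (p0 :: ps) := by
    rw [← hcons]; exact hsort.isChain
  have hSP : SPath (win p0) (ps.map win) 28 := by
    refine path_build w ps p0 28 hchain ?_
    intro q hq
    have := hbound q (by rw [hcons]; exact List.mem_cons_of_mem _ hq)
    omega
  have hp0l : p0 ∈ l := by rw [hcons]; simp
  have hp0nps : p0 ∉ ps := by
    rw [hcons] at hnodupl
    exact (List.nodup_cons.mp hnodupl).1
  have hpsnodup : ps.Nodup := by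
    rw [hcons] at hnodupl
    exact (List.nodup_cons.mp hnodupl).2
  obtain ⟨σ0, hσ0, hσ02⟩ := hwinofFn p0 hp0l
  -- the mapped windows are a permutation of permList.erase (win p0)
  have hnd1 : (ps.map win).Nodup := by
    refine List.Nodup.map_on ?_ hpsnodup
    intro x hx y hy hxy
    exact hwininj x (by rw [hcons]; exact List.mem_cons_of_mem _ hx) y
      (by rw [hcons]; exact List.mem_cons_of_mem _ hy) hxy
  have hnd2 : (permList.erase (win p0)).Nodup :=
    List.erase_sublist.nodup permList_nodup
  have hpermeq : (ps.map win).Perm (permList.erase (win p0)) := by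
    rw [List.perm_ext_iff_of_nodup hnd1 hnd2]
    intro a
    constructor
    · intro ha
      obtain ⟨q, hq, hqa⟩ := List.mem_map.mp ha
      have hql : q ∈ l := by rw [hcons]; exact List.mem_cons_of_mem _ hq
      obtain ⟨σ, hσ, hσ2⟩ := hwinofFn q hql
      have hane : a ≠ win p0 := by
        intro he
        have : q = p0 := hwininj q hql p0 hp0l (by rw [hqa, he])
        exact hp0nps (this ▸ hq)
      rw [← hqa, hσ2]
      exact (List.mem_erase_of_ne (by rw [← hσ2, hqa]; exact hane)).mpr (fact_ofFn_mem σ)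
    · intro ha
      obtain ⟨hane, hamem⟩ := (List.Nodup.mem_erase_iff permList_nodup).mp ha
      obtain ⟨σ, hσ⟩ := fact_surj a hamem
      have hql : pos σ ∈ l := (hmemP (pos σ)).mpr ⟨σ, rfl⟩
      have hwq : win (pos σ) = a := by rw [hwdef]; exact (hwin σ).trans hσ
      have hqps : pos σ ∈ ps := by
        rw [hcons] at hql
        rcases List.mem_cons.mp hql with h1 | h1
        · exact absurd (by rw [← hwq, h1]) hane
        · exact h1
      exact List.mem_map.mpr ⟨pos σ, hqps, hwq⟩
  have hSP2 : SPath (win p0) (permList.erase (win p0)) 28 := path_perm hSP _ hpermeq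
  have hmemall : ∀ x ∈ win p0 :: permList.erase (win p0), x ∈ permList := by
    intro x hx
    rcases List.mem_cons.mp hx with h1 | h1
    · rw [h1, hσ02]; exact fact_ofFn_mem σ0
    · exact List.erase_sublist.mem h1
  have hp0mem : win p0 ∈ permList := by rw [hσ02]; exact fact_ofFn_mem σ0
  have hlenerase : (permList.erase (win p0)).length < 24 := by
    rw [List.length_erase_of_mem hp0mem, permList_length]
    omega
  have hs : search 24 (win p0) (permList.erase (win p0)) 28 = true :=
    search_complete hSP2 24 hmemall hlenerase
  have hmf := (List.all_eq_true.mp mainFact) (win p0) hp0mem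
  rw [hs] at hmf
  simp at hmf
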